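/- There is no submetry with connected fibers from ℝⁿ (n ≥ 2) onto a circle S¹ (the quotient ℝ/aℤ with its length metric, a > 0). Equivalently: there is no surjective 1-Lipschitz map P : ℝⁿ → ℝ/aℤ with connected fibers such that dist(P(x), y) = dist(x, P⁻¹(y)) for all x and y. -/

import Mathlib

set_option linter.unusedSectionVars false

open Metric Set Finset

namespace NoSubmetryAux

variable {a : ℝ}

/-- Every point of `AddCircle a` has a representative of absolute value at most `a/2`. -/
lemma exists_rep (ha : 0 < a) (z : AddCircle a) :
    ∃ r : ℝ, (r : AddCircle a) = z ∧ |r| ≤ a / 2 := by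
  haveI : Fact (0 < a) := ⟨ha⟩
  refine ⟨((AddCircle.equivIco a (-(a/2)) z : Set.Ico (-(a/2)) (-(a/2) + a)) : ℝ), ?_, ?_⟩
  · exact (AddCircle.equivIco a (-(a/2))).symm_apply_apply z
  · have h := (AddCircle.equivIco a (-(a/2)) z).2
    rw [abs_le]
    exact ⟨h.1, by have := h.2; simp at this ⊢; linarith⟩

lemma coe_sub' (u v : ℝ) : ((u - v : ℝ) : AddCircle a) = (u : AddCircle a) - (v : AddCircle a) := by
  have : ((u - v : ℝ) : AddCircle a) + (v : AddCircle a) = (u : AddCircle a) := by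
    rw [← AddCircle.coe_add, sub_add_cancel]
  exact eq_sub_of_add_eq this

/-- Injectivity of the coercion on a window of width `< a`. -/
lemma coe_inj (ha : 0 < a) {r s : ℝ} (h : (r : AddCircle a) = (s : AddCircle a))
    (hrs : |r - s| < a) : r = s := by
  have h0 : ((r - s : ℝ) : AddCircle a) = 0 := by rw [coe_sub', h, sub_self]
  obtain ⟨k, hk⟩ := (AddCircle.coe_eq_zero_iff (p := a) (x := r - s)).1 h0
  have hk2 : (k : ℝ) * a = r - s := by rw [← hk]; simp [zsmul_eq_mul]
  clear hk
  rcases eq_or_ne k 0 with h0' | h0'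
  · subst h0'; simp at hk2; linarith [abs_nonneg (r - s), hk2.symm]
  · exfalso
    have h1 : (1 : ℝ) ≤ |(k : ℝ)| := by exact_mod_cast Int.one_le_abs h0'
    have : |(k : ℝ) * a| = |(k : ℝ)| * a := by rw [abs_mul, abs_of_pos ha]
    rw [← hk2] at hrs
    nlinarith

noncomputable def lft (ha : 0 < a) (z : AddCircle a) : ℝ := (exists_rep ha z).choose

lemma lft_coe (ha : 0 < a) (z : AddCircle a) : ((lft ha z : ℝ) : AddCircle a) = z :=
  (exists_rep ha z).choose_spec.1

lemma abs_lft_le (ha : 0 < a) (z : AddCircle a) : |lft ha z| ≤ a / 2 :=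
  (exists_rep ha z).choose_spec.2

lemma abs_lft_eq (ha : 0 < a) (z : AddCircle a) : |lft ha z| = ‖z‖ := by
  conv_rhs => rw [← lft_coe ha z]
  refine ((AddCircle.norm_coe_eq_abs_iff a ha.ne').2 ?_).symm
  rw [abs_of_pos ha]
  exact abs_lft_le ha z

section Lift

variable {V : Type*} [NormedAddCommGroup V] [NormedSpace ℝ V]
variable {P : V → AddCircle a}

/-- The canonical small real number `δ x y` with `π (δ x y) = P y - P x`. -/
noncomputable def del (ha : 0 < a) (P : V → AddCircle a) (x y : V) : ℝ :=
  lft ha (P y - P x)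

lemma del_coe (ha : 0 < a) (x y : V) :
    ((del ha P x y : ℝ) : AddCircle a) = P y - P x := lft_coe _ _

lemma abs_del_le_half (ha : 0 < a) (x y : V) : |del ha P x y| ≤ a / 2 := abs_lft_le _ _

variable (hP : ∀ u v : V, dist (P u) (P v) ≤ dist u v)
include hP

lemma abs_del_le (ha : 0 < a) (x y : V) : |del ha P x y| ≤ dist x y := by
  rw [del, abs_lft_eq, ← dist_eq_norm]
  exact (hP _ _).trans_eq (dist_comm _ _)

lemma del_self (ha : 0 < a) (x : V) : del ha P x x = 0 := by
  have := abs_del_le hP ha x x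
  rw [dist_self] at this
  exact abs_eq_zero.1 (le_antisymm this (abs_nonneg _))

lemma del_cocycle (ha : 0 < a) {x y z : V} (h : dist x y + dist y z < a / 2) :
    del ha P x z = del ha P x y + del ha P y z := by
  refine coe_inj ha ?_ ?_
  · rw [del_coe, AddCircle.coe_add, del_coe, del_coe]; abel
  · have h1 := abs_del_le_half (P := P) ha x z
    have h2 := abs_del_le hP ha x y
    have h3 := abs_del_le hP ha y z
    have hd1 := dist_nonneg (x := x) (y := y)
    have hd2 := dist_nonneg (x := y) (y := z)
    calc |del ha P x z - (del ha P x y + del ha P y z)|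
        ≤ |del ha P x z| + |del ha P x y + del ha P y z| := abs_sub _ _
      _ ≤ a / 2 + (|del ha P x y| + |del ha P y z|) := by
          gcongr; exact abs_add_le _ _
      _ < a := by linarith

lemma del_symm (ha : 0 < a) {x y : V} (h : dist x y < a / 4) :
    del ha P y x = -del ha P x y := by
  have h' : dist x y + dist y x < a / 2 := by rw [dist_comm y x]; linarith
  have := del_cocycle hP ha (x := x) (y := y) (z := x) h'
  rw [del_self hP ha] at this
  linarith

end Lift

end NoSubmetryAux

section LiftDef

open NoSubmetryAux

variable {a : ℝ} {V : Type*} [NormedAddCommGroup V] [NormedSpace ℝ V]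

/-- Chain sum of `del` along the uniform partition of the segment from `0` to `x`. -/
noncomputable def chainS (ha : 0 < a) (P : V → AddCircle a) (x : V) (N : ℕ) : ℝ :=
  ∑ i ∈ Finset.range N,
    del ha P (((i : ℝ) / (N : ℝ)) • x) ((((i : ℝ) + 1) / (N : ℝ)) • x)

/-- The lift of `P` (normalized by `liftF 0 = 0`). -/
noncomputable def liftF (ha : 0 < a) (P : V → AddCircle a) (x : V) : ℝ :=
  chainS ha P x (⌈8 * ‖x‖ / a⌉₊ + 1)

end LiftDef

namespace NoSubmetryAux

variable {a : ℝ} {V : Type*} [NormedAddCommGroup V] [NormedSpace ℝ V]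
variable {P : V → AddCircle a}

lemma coe_chain (ha : 0 < a) (g : ℕ → V) (K : ℕ) :
    ((∑ i ∈ Finset.range K, del ha P (g i) (g (i + 1)) : ℝ) : AddCircle a)
      = P (g K) - P (g 0) := by
  induction K with
  | zero => simp
  | succ K ih =>
      rw [Finset.sum_range_succ, AddCircle.coe_add, ih, del_coe]
      abel

lemma dist_smul_line (c d : ℝ) (v : V) : dist (c • v) (d • v) = |c - d| * ‖v‖ := by
  rw [dist_eq_norm, ← sub_smul, norm_smul, Real.norm_eq_abs]

lemma fine_of (ha : 0 < a) (r : ℝ) : r < ((⌈8 * r / a⌉₊ + 1 : ℕ) : ℝ) * (a / 8) := by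
  have h1 : 8 * r / a < ((⌈8 * r / a⌉₊ : ℝ) + 1) := (Nat.le_ceil _).trans_lt (lt_add_one _)
  have h2 : 8 * r < ((⌈8 * r / a⌉₊ : ℝ) + 1) * a := (div_lt_iff₀ ha).1 h1
  push_cast
  linarith

variable (hP : ∀ u v : V, dist (P u) (P v) ≤ dist u v)
include hP

lemma chain_sub (ha : 0 < a) {p q : V} (h : dist p q < a / 8) {M : ℕ} (hM : M ≠ 0) :
    (∑ j ∈ Finset.range M, del ha P (p + ((j : ℝ) / (M : ℝ)) • (q - p))
        (p + (((j : ℝ) + 1) / (M : ℝ)) • (q - p))) = del ha P p q := by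
  have hM' : (0 : ℝ) < (M : ℝ) := Nat.cast_pos.2 (Nat.pos_of_ne_zero hM)
  have hqp : ‖q - p‖ = dist p q := by rw [dist_eq_norm']
  have hd0 : (0 : ℝ) ≤ dist p q := dist_nonneg
  have dseg : ∀ s t : ℝ, dist (p + s • (q - p)) (p + t • (q - p)) = |s - t| * dist p q := by
    intro s t
    rw [dist_add_left, dist_smul_line, hqp]
  have dseg0 : ∀ t : ℝ, dist p (p + t • (q - p)) = |t| * dist p q := by
    intro t
    rw [dist_eq_norm', add_sub_cancel_left, norm_smul, Real.norm_eq_abs, hqp]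
  have key : ∀ K : ℕ, K ≤ M →
      (∑ j ∈ Finset.range K, del ha P (p + ((j : ℝ) / (M : ℝ)) • (q - p))
        (p + (((j : ℝ) + 1) / (M : ℝ)) • (q - p)))
        = del ha P p (p + ((K : ℝ) / (M : ℝ)) • (q - p)) := by
    intro K
    induction K with
    | zero =>
        intro _
        simp [del_self hP ha]
    | succ K ih =>
        intro hK
        have hKM : (K : ℝ) / (M : ℝ) ≤ 1 := by
          rw [div_le_one hM']
          exact_mod_cast Nat.le_of_succ_le hK
        have hKM0 : (0 : ℝ) ≤ (K : ℝ) / (M : ℝ) := by positivity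
        have e1 : dist p (p + ((K : ℝ) / (M : ℝ)) • (q - p)) ≤ dist p q := by
          rw [dseg0, abs_of_nonneg hKM0]
          nlinarith
        have e2 : dist (p + ((K : ℝ) / (M : ℝ)) • (q - p))
            (p + (((K : ℝ) + 1) / (M : ℝ)) • (q - p)) ≤ dist p q := by
          rw [dseg]
          have : |(K : ℝ) / (M : ℝ) - ((K : ℝ) + 1) / (M : ℝ)| = 1 / (M : ℝ) := by
            rw [div_sub_div_same, abs_div, abs_of_pos hM']
            norm_num
          rw [this]
          have h1M : 1 / (M : ℝ) ≤ 1 := by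
            rw [div_le_one hM']; exact_mod_cast Nat.one_le_iff_ne_zero.2 hM
          nlinarith
        have cond : dist p (p + ((K : ℝ) / (M : ℝ)) • (q - p)) +
            dist (p + ((K : ℝ) / (M : ℝ)) • (q - p))
              (p + (((K : ℝ) + 1) / (M : ℝ)) • (q - p)) < a / 2 := by
          linarith
        rw [Finset.sum_range_succ, ih (by omega), ← del_cocycle hP ha cond]
        congr 2
        push_cast
        ring
  have hfin := key M le_rfl
  rw [div_self hM'.ne', one_smul, add_sub_cancel] at hfin
  exact hfin

lemma chainS_mul (ha : 0 < a) (x : V) {N : ℕ} (hN : N ≠ 0)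
    (hfine : ‖x‖ < (N : ℝ) * (a / 8)) {M : ℕ} (hM : M ≠ 0) :
    chainS ha P x (N * M) = chainS ha P x N := by
  have hN' : (0 : ℝ) < (N : ℝ) := Nat.cast_pos.2 (Nat.pos_of_ne_zero hN)
  have hM' : (0 : ℝ) < (M : ℝ) := Nat.cast_pos.2 (Nat.pos_of_ne_zero hM)
  have main : ∀ L : ℕ,
      (∑ k ∈ Finset.range (L * M),
        del ha P (((k : ℝ) / ((N * M : ℕ) : ℝ)) • x)
          ((((k : ℝ) + 1) / ((N * M : ℕ) : ℝ)) • x))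
      = ∑ i ∈ Finset.range L,
        del ha P (((i : ℝ) / (N : ℝ)) • x) ((((i : ℝ) + 1) / (N : ℝ)) • x) := by
    intro L
    induction L with
    | zero => simp
    | succ L ih =>
        rw [Nat.succ_mul, Finset.sum_range_add, ih, Finset.sum_range_succ]
        congr 1
        -- inner block equals one del along the coarse partition
        set p : V := ((L : ℝ) / (N : ℝ)) • x with hp
        set q : V := (((L : ℝ) + 1) / (N : ℝ)) • x with hq
        have hqp : q - p = ((N : ℝ)⁻¹) • x := by
          rw [hp, hq, ← sub_smul]
          congr 1
          field_simp
          ring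
        have hdist : dist p q < a / 8 := by
          rw [dist_eq_norm', hqp, norm_smul, Real.norm_eq_abs, abs_inv,
            abs_of_pos hN']
          have h3 : (N : ℝ)⁻¹ * ‖x‖ < (N : ℝ)⁻¹ * ((N : ℝ) * (a / 8)) :=
            mul_lt_mul_of_pos_left hfine (by positivity)
          rwa [← mul_assoc, inv_mul_cancel₀ hN'.ne', one_mul] at h3
        have := chain_sub hP ha hdist hM
        rw [← this]
        refine Finset.sum_congr rfl fun j hj => ?_
        congr 1
        · rw [hqp, smul_smul, hp, ← add_smul]
          congr 1
          push_cast
          field_simp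
        · rw [hqp, smul_smul, hp, ← add_smul]
          congr 1
          push_cast
          field_simp
          ring
  have h2 := main N
  rw [chainS, chainS]
  exact h2

lemma chainS_eq_liftF (ha : 0 < a) (x : V) {N : ℕ} (hN : N ≠ 0)
    (h : ‖x‖ < (N : ℝ) * (a / 8)) : chainS ha P x N = liftF ha P x := by
  set N' : ℕ := ⌈8 * ‖x‖ / a⌉₊ + 1 with hN'def
  have hN'0 : N' ≠ 0 := by omega
  have hfine' : ‖x‖ < (N' : ℝ) * (a / 8) := by
    have := fine_of ha ‖x‖
    rwa [hN'def]
  have h1 := chainS_mul hP ha x hN h hN'0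
  have h2 := chainS_mul hP ha x hN'0 hfine' hN
  calc chainS ha P x N = chainS ha P x (N * N') := h1.symm
    _ = chainS ha P x (N' * N) := by rw [Nat.mul_comm]
    _ = chainS ha P x N' := h2
    _ = liftF ha P x := rfl

lemma liftF_zero (ha : 0 < a) : liftF ha P (0 : V) = 0 := by
  rw [liftF, chainS]
  simp [smul_zero, del_self hP ha]

lemma liftF_add (ha : 0 < a) {x y : V} (hxy : dist x y < a / 8) :
    liftF ha P y = liftF ha P x + del ha P x y := by
  set N : ℕ := ⌈8 * max ‖x‖ ‖y‖ / a⌉₊ + 1 with hNdef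
  have hN0 : N ≠ 0 := by omega
  have hN' : (0 : ℝ) < (N : ℝ) := Nat.cast_pos.2 (Nat.pos_of_ne_zero hN0)
  have hmax : max ‖x‖ ‖y‖ < (N : ℝ) * (a / 8) := by
    have := fine_of ha (max ‖x‖ ‖y‖)
    rwa [hNdef]
  have hxf : ‖x‖ < (N : ℝ) * (a / 8) := (le_max_left _ _).trans_lt hmax
  have hyf : ‖y‖ < (N : ℝ) * (a / 8) := (le_max_right _ _).trans_lt hmax
  rw [← chainS_eq_liftF hP ha x hN0 hxf, ← chainS_eq_liftF hP ha y hN0 hyf,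
    chainS, chainS]
  set d := dist x y with hd
  have hd0 : (0 : ℝ) ≤ d := dist_nonneg
  have hsx : ∀ i : ℕ, dist (((i : ℝ) / (N : ℝ)) • x) ((((i : ℝ) + 1) / (N : ℝ)) • x)
      < a / 8 := by
    intro i
    rw [dist_smul_line]
    have he : |(i : ℝ) / (N : ℝ) - ((i : ℝ) + 1) / (N : ℝ)| = 1 / (N : ℝ) := by
      rw [div_sub_div_same, abs_div, abs_of_pos hN']
      norm_num
    rw [he, div_mul_eq_mul_div, one_mul, div_lt_iff₀ hN']
    calc ‖x‖ < (N : ℝ) * (a / 8) := hxf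
      _ = a / 8 * (N : ℝ) := by ring
  have hsy : ∀ i : ℕ, dist (((i : ℝ) / (N : ℝ)) • y) ((((i : ℝ) + 1) / (N : ℝ)) • y)
      < a / 8 := by
    intro i
    rw [dist_smul_line]
    have he : |(i : ℝ) / (N : ℝ) - ((i : ℝ) + 1) / (N : ℝ)| = 1 / (N : ℝ) := by
      rw [div_sub_div_same, abs_div, abs_of_pos hN']
      norm_num
    rw [he, div_mul_eq_mul_div, one_mul, div_lt_iff₀ hN']
    calc ‖y‖ < (N : ℝ) * (a / 8) := hyf
      _ = a / 8 * (N : ℝ) := by ring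
  have hcross : ∀ t : ℝ, 0 ≤ t → t ≤ (N : ℝ) →
      dist ((t / (N : ℝ)) • y) ((t / (N : ℝ)) • x) ≤ d := by
    intro t ht0 htN
    rw [dist_eq_norm, ← smul_sub, norm_smul, Real.norm_eq_abs]
    have h1 : |t / (N : ℝ)| ≤ 1 := by
      rw [abs_of_nonneg (by positivity), div_le_one hN']
      exact htN
    have h2 : ‖y - x‖ = d := by rw [hd, dist_eq_norm']
    rw [h2]
    nlinarith
  set F : ℕ → ℝ :=
    fun i => del ha P (((i : ℝ) / (N : ℝ)) • y) (((i : ℝ) / (N : ℝ)) • x) with hF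
  have hFsucc : ∀ i : ℕ,
      F (i + 1) = del ha P ((((i : ℝ) + 1) / (N : ℝ)) • y)
        ((((i : ℝ) + 1) / (N : ℝ)) • x) := by
    intro i
    simp only [hF]
    push_cast
    ring_nf
  have term : ∀ i ∈ Finset.range N,
      del ha P (((i : ℝ) / (N : ℝ)) • y) ((((i : ℝ) + 1) / (N : ℝ)) • y)
        = del ha P (((i : ℝ) / (N : ℝ)) • x) ((((i : ℝ) + 1) / (N : ℝ)) • x)
          + (F i - F (i + 1)) := by
    intro i hi
    have hiN : (i : ℝ) ≤ (N : ℝ) := by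
      exact_mod_cast (Finset.mem_range.1 hi).le
    have hi1N : (i : ℝ) + 1 ≤ (N : ℝ) := by
      have : (i + 1 : ℕ) ≤ N := Finset.mem_range.1 hi
      exact_mod_cast this
    have hc1 := hcross (i : ℝ) (by positivity) hiN
    have hc2 := hcross ((i : ℝ) + 1) (by positivity) hi1N
    have hs := hsx i
    have hsy' := hsy i
    have c1 : del ha P (((i : ℝ) / (N : ℝ)) • y) ((((i : ℝ) + 1) / (N : ℝ)) • x)
        = del ha P (((i : ℝ) / (N : ℝ)) • y) (((i : ℝ) / (N : ℝ)) • x)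
          + del ha P (((i : ℝ) / (N : ℝ)) • x) ((((i : ℝ) + 1) / (N : ℝ)) • x) := by
      refine del_cocycle hP ha ?_
      have hda : d < a / 8 := hxy
      linarith
    have hmid : dist (((i : ℝ) / (N : ℝ)) • y) ((((i : ℝ) + 1) / (N : ℝ)) • x)
        ≤ d + a / 8 := by
      calc dist (((i : ℝ) / (N : ℝ)) • y) ((((i : ℝ) + 1) / (N : ℝ)) • x)
          ≤ dist (((i : ℝ) / (N : ℝ)) • y) (((i : ℝ) / (N : ℝ)) • x)
            + dist (((i : ℝ) / (N : ℝ)) • x) ((((i : ℝ) + 1) / (N : ℝ)) • x) :=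
            dist_triangle _ _ _
        _ ≤ d + a / 8 := by linarith
    have c2 : del ha P (((i : ℝ) / (N : ℝ)) • y) ((((i : ℝ) + 1) / (N : ℝ)) • y)
        = del ha P (((i : ℝ) / (N : ℝ)) • y) ((((i : ℝ) + 1) / (N : ℝ)) • x)
          + del ha P ((((i : ℝ) + 1) / (N : ℝ)) • x) ((((i : ℝ) + 1) / (N : ℝ)) • y) := by
      refine del_cocycle hP ha ?_
      have h3 : dist ((((i : ℝ) + 1) / (N : ℝ)) • x) ((((i : ℝ) + 1) / (N : ℝ)) • y)
          ≤ d := by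
        rw [dist_comm]
        exact hc2
      have hda : d < a / 8 := hxy
      linarith
    have hanti : del ha P ((((i : ℝ) + 1) / (N : ℝ)) • x) ((((i : ℝ) + 1) / (N : ℝ)) • y)
        = - del ha P ((((i : ℝ) + 1) / (N : ℝ)) • y) ((((i : ℝ) + 1) / (N : ℝ)) • x) := by
      refine del_symm hP ha ?_
      have hda : d < a / 8 := hxy
      calc dist ((((i : ℝ) + 1) / (N : ℝ)) • y) ((((i : ℝ) + 1) / (N : ℝ)) • x) ≤ d := hc2
        _ < a / 4 := by linarith
    rw [c2, c1, hanti, hFsucc, hF]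
    ring
  rw [Finset.sum_congr rfl term, Finset.sum_add_distrib, Finset.sum_range_sub' F N]
  have h0' : F 0 = 0 := by
    simp only [hF]
    norm_num
    exact del_self hP ha 0
  have hNN : F N = - del ha P x y := by
    simp only [hF]
    rw [div_self hN'.ne', one_smul, one_smul]
    refine del_symm hP ha ?_
    have hda : d < a / 8 := hxy
    rw [← hd]
    linarith
  rw [h0', hNN]
  ring

lemma liftF_lip (ha : 0 < a) (x y : V) :
    |liftF ha P y - liftF ha P x| ≤ dist x y := by
  set d := dist x y with hd
  have hd0 : (0 : ℝ) ≤ d := dist_nonneg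
  set M : ℕ := ⌈8 * d / a⌉₊ + 1 with hMdef
  have hM0 : M ≠ 0 := by omega
  have hM' : (0 : ℝ) < (M : ℝ) := Nat.cast_pos.2 (Nat.pos_of_ne_zero hM0)
  have hfine : d < (M : ℝ) * (a / 8) := by
    have := fine_of ha d
    rwa [hMdef]
  set w : ℕ → V := fun j => x + ((j : ℝ) / (M : ℝ)) • (y - x) with hw
  have hyx : ‖y - x‖ = d := by rw [hd, dist_eq_norm']
  have hstep : ∀ j : ℕ, dist (w j) (w (j + 1)) = d / (M : ℝ) := by
    intro j
    simp only [hw]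
    rw [dist_add_left, dist_smul_line, hyx]
    have he : |(j : ℝ) / (M : ℝ) - ((j + 1 : ℕ) : ℝ) / (M : ℝ)| = 1 / (M : ℝ) := by
      have h9 : ((j + 1 : ℕ) : ℝ) = (j : ℝ) + 1 := by exact_mod_cast rfl
      rw [h9, div_sub_div_same, abs_div, abs_of_pos hM']
      norm_num
    rw [he]
    ring
  have hstep' : ∀ j : ℕ, dist (w j) (w (j + 1)) < a / 8 := by
    intro j
    rw [hstep, div_lt_iff₀ hM']
    calc d < (M : ℝ) * (a / 8) := hfine
      _ = a / 8 * (M : ℝ) := by ring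
  have key : ∀ K : ℕ, K ≤ M →
      |liftF ha P (w K) - liftF ha P x| ≤ ((K : ℝ) / (M : ℝ)) * d := by
    intro K
    induction K with
    | zero =>
        intro _
        have hw0 : w 0 = x := by simp [hw]
        rw [hw0]
        simp
    | succ K ih =>
        intro hK
        have hKM := ih (by omega)
        have step := liftF_add hP ha (hstep' K)
        have habs : |del ha P (w K) (w (K + 1))| ≤ d / (M : ℝ) := by
          rw [← hstep K]
          exact abs_del_le hP ha _ _
        have htri : |liftF ha P (w (K + 1)) - liftF ha P x|
            ≤ |liftF ha P (w K) - liftF ha P x| + |del ha P (w K) (w (K + 1))| := by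
          rw [step]
          have : liftF ha P (w K) + del ha P (w K) (w (K + 1)) - liftF ha P x
              = (liftF ha P (w K) - liftF ha P x) + del ha P (w K) (w (K + 1)) := by
            ring
          rw [this]
          exact abs_add_le _ _
        have hfin : ((K : ℝ) / (M : ℝ)) * d + d / (M : ℝ)
            = (((K : ℝ) + 1) / (M : ℝ)) * d := by
          field_simp
        have hcast : ((K + 1 : ℕ) : ℝ) = (K : ℝ) + 1 := by push_cast; ring
        rw [hcast]
        calc |liftF ha P (w (K + 1)) - liftF ha P x|
            ≤ ((K : ℝ) / (M : ℝ)) * d + d / (M : ℝ) := by linarith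
          _ = (((K : ℝ) + 1) / (M : ℝ)) * d := hfin
  have hfin := key M le_rfl
  have hwM : w M = y := by
    simp only [hw]
    rw [div_self hM'.ne', one_smul]
    abel
  rw [hwM, div_self hM'.ne', one_mul] at hfin
  exact hfin

lemma coe_liftF (ha : 0 < a) (x : V) :
    ((liftF ha P x : ℝ) : AddCircle a) = P x - P (0 : V) := by
  set N : ℕ := ⌈8 * ‖x‖ / a⌉₊ + 1 with hNdef
  have hN0 : N ≠ 0 := by omega
  have hN' : (0 : ℝ) < (N : ℝ) := Nat.cast_pos.2 (Nat.pos_of_ne_zero hN0)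
  have hcc := coe_chain (P := P) ha (fun i : ℕ => ((i : ℝ) / (N : ℝ)) • x) N
  simp only [Nat.cast_add, Nat.cast_one, Nat.cast_zero] at hcc
  rw [zero_div, zero_smul, div_self hN'.ne', one_smul] at hcc
  rw [liftF, ← hNdef, chainS]
  exact hcc

end NoSubmetryAux


set_option maxHeartbeats 1000000 in
open NoSubmetryAux in
theorem no_submetry_Rn_to_circle (n : ℕ) (hn : 2 ≤ n) (a : ℝ) (ha : 0 < a) :
    ¬ ∃ P : EuclideanSpace ℝ (Fin n) → AddCircle a,
        Function.Surjective P ∧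
        (∀ y : AddCircle a, IsConnected (P ⁻¹' {y})) ∧
        (∀ (x : EuclideanSpace ℝ (Fin n)) (y : AddCircle a),
          dist (P x) y = Metric.infDist x (P ⁻¹' {y})) := by
  rintro ⟨P, hsurj, hconn, hd⟩
  -- `P` is 1-Lipschitz
  have hP : ∀ u v : EuclideanSpace ℝ (Fin n), dist (P u) (P v) ≤ dist u v := by
    intro u v
    rw [hd u (P v)]
    exact Metric.infDist_le_dist_of_mem (Set.mem_preimage.2 (Set.mem_singleton _))
  have hlip : ∀ x y : EuclideanSpace ℝ (Fin n),
      |liftF ha P y - liftF ha P x| ≤ dist x y := liftF_lip hP ha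
  have hlw : LipschitzWith 1 (liftF ha P) := by
    refine LipschitzWith.of_dist_le_mul fun x y => ?_
    rw [Real.dist_eq, NNReal.coe_one, one_mul, abs_sub_comm]
    exact hlip x y
  have hcont : Continuous (liftF ha P) := hlw.continuous
  have hcoe : ∀ x : EuclideanSpace ℝ (Fin n),
      ((liftF ha P x : ℝ) : AddCircle a) = P x - P 0 := coe_liftF hP ha
  have hnorm : ∀ z : AddCircle a, ‖z‖ ≤ a / 2 := by
    intro z
    have := AddCircle.norm_le_half_period (p := a) (x := z) ha.ne'
    rwa [abs_of_pos ha] at this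
  have hmult : ∀ r : ℝ, ((r : ℝ) : AddCircle a) = 0 → ∃ k : ℤ, (k : ℝ) * a = r := by
    intro r hr
    obtain ⟨k, hk⟩ := (AddCircle.coe_eq_zero_iff (p := a) (x := r)).1 hr
    exact ⟨k, by rw [← hk]; simp [zsmul_eq_mul]⟩
  -- the lift is constant on fibers of `P` (uses connectedness)
  have fib_not_lt : ∀ x x' : EuclideanSpace ℝ (Fin n),
      P x = P x' → ¬ liftF ha P x < liftF ha P x' := by
    intro x x' hPx hlt
    have hxmem : x ∈ P ⁻¹' {P x} := Set.mem_preimage.2 (Set.mem_singleton _)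
    have hx'mem : x' ∈ P ⁻¹' {P x} := by
      simp only [Set.mem_preimage, Set.mem_singleton_iff]
      exact hPx.symm
    have hdiff : ((liftF ha P x' - liftF ha P x : ℝ) : AddCircle a) = 0 := by
      rw [coe_sub', hcoe, hcoe, hPx, sub_self]
    obtain ⟨k, hk⟩ := hmult _ hdiff
    have hkpos : 0 < (k : ℝ) * a := by rw [hk]; linarith
    have hk1 : 1 ≤ k := by
      by_contra hc
      push_neg at hc
      have hc' : k ≤ 0 := by omega
      have : (k : ℝ) ≤ 0 := by exact_mod_cast hc'
      nlinarith
    have hka : a ≤ liftF ha P x' - liftF ha P x := by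
      have h1 : (1 : ℝ) ≤ (k : ℝ) := by exact_mod_cast hk1
      nlinarith
    have himg : IsConnected (liftF ha P '' (P ⁻¹' {P x})) :=
      (hconn (P x)).image _ hcont.continuousOn
    have hsub : Set.Icc (liftF ha P x) (liftF ha P x') ⊆ liftF ha P '' (P ⁻¹' {P x}) :=
      himg.isPreconnected.Icc_subset ⟨x, hxmem, rfl⟩ ⟨x', hx'mem, rfl⟩
    have hmem2 : liftF ha P x + a / 2 ∈ Set.Icc (liftF ha P x) (liftF ha P x') :=
      Set.mem_Icc.2 ⟨by linarith, by linarith⟩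
    obtain ⟨w, hw, hfw⟩ := hsub hmem2
    have hPw : P w = P x := by
      have := Set.mem_preimage.1 hw
      simpa using this
    have hhalf : ((a / 2 : ℝ) : AddCircle a) = 0 := by
      have h1 : ((liftF ha P w : ℝ) : AddCircle a) = ((liftF ha P x : ℝ) : AddCircle a) := by
        rw [hcoe, hcoe, hPw]
      rw [hfw, AddCircle.coe_add] at h1
      exact add_eq_left.1 h1
    obtain ⟨m, hm⟩ := hmult _ hhalf
    have hmpos : (0 : ℝ) < (m : ℝ) * a := by rw [hm]; linarith
    have hm1 : 1 ≤ m := by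
      by_contra hc
      push_neg at hc
      have hc' : m ≤ 0 := by omega
      have : (m : ℝ) ≤ 0 := by exact_mod_cast hc'
      nlinarith
    have : (1 : ℝ) ≤ (m : ℝ) := by exact_mod_cast hm1
    nlinarith
  have fib_const : ∀ x x' : EuclideanSpace ℝ (Fin n),
      P x = P x' → liftF ha P x = liftF ha P x' := by
    intro x x' h
    rcases lt_trichotomy (liftF ha P x) (liftF ha P x') with h1 | h1 | h1
    · exact absurd h1 (fib_not_lt x x' h)
    · exact h1
    · exact absurd h1 (fib_not_lt x' x h.symm)
  -- the key comparison: the lift is 1-Lipschitz w.r.t. the circle distance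
  have circLip : ∀ x z : EuclideanSpace ℝ (Fin n),
      |liftF ha P x - liftF ha P z| ≤ dist (P x) (P z) := by
    intro x z
    by_contra hcon
    push_neg at hcon
    have h0 : Metric.infDist x (P ⁻¹' {P z}) < |liftF ha P x - liftF ha P z| := by
      rw [← hd]
      exact hcon
    obtain ⟨w, hw, hltw⟩ := (Metric.infDist_lt_iff ⟨z, Set.mem_preimage.2 (Set.mem_singleton _)⟩).1 h0
    have hPwz : P w = P z := by
      have := Set.mem_preimage.1 hw
      simpa using this
    have hfw : liftF ha P w = liftF ha P z := fib_const w z hPwz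
    have h2 : |liftF ha P x - liftF ha P z| ≤ dist x w := by
      rw [abs_sub_comm, ← hfw]
      exact hlip x w
    linarith
  have hf0 : liftF ha P (0 : EuclideanSpace ℝ (Fin n)) = 0 := liftF_zero hP ha
  -- evaluation of the lift on prescribed fibers
  have hval : ∀ c : ℝ, ∀ z : EuclideanSpace ℝ (Fin n),
      P z = P 0 + (c : AddCircle a) →
      (∃ k : ℤ, liftF ha P z = c + (k : ℝ) * a) ∧ |liftF ha P z| ≤ a / 2 := by
    intro c z hz
    constructor
    · have h1 : ((liftF ha P z - c : ℝ) : AddCircle a) = 0 := by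
        rw [coe_sub', hcoe, hz]
        abel
      obtain ⟨k, hk⟩ := hmult _ h1
      exact ⟨k, by linarith⟩
    · have h2 := circLip z 0
      rw [hf0, sub_zero] at h2
      have h3 : dist (P z) (P 0) = ‖((c : ℝ) : AddCircle a)‖ := by
        rw [dist_eq_norm, hz]
        congr 1
        abel
      rw [h3] at h2
      exact h2.trans (hnorm _)
  -- endgame
  obtain ⟨z1, hz1⟩ := hsurj (P 0 + ((a / 2 : ℝ) : AddCircle a))
  obtain ⟨⟨k1, hk1⟩, hb1⟩ := hval (a / 2) z1 hz1
  have hb1' := abs_le.1 hb1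
  have hk1cases : k1 = 0 ∨ k1 = -1 := by
    have hup : k1 ≤ 0 := by
      by_contra hc
      push_neg at hc
      have : (1 : ℝ) ≤ (k1 : ℝ) := by exact_mod_cast hc
      nlinarith
    have hlo : -1 ≤ k1 := by
      by_contra hc
      push_neg at hc
      have hc' : k1 ≤ -2 := by omega
      have : (k1 : ℝ) ≤ -2 := by exact_mod_cast hc'
      nlinarith
    omega
  rcases hk1cases with hcase | hcase
  · -- `liftF z1 = a/2`; use the fiber over `P 0 + 3a/4`
    have hfz1 : liftF ha P z1 = a / 2 := by
      rw [hk1, hcase]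
      norm_num
    obtain ⟨z2, hz2⟩ := hsurj (P 0 + ((3 * a / 4 : ℝ) : AddCircle a))
    obtain ⟨⟨k2, hk2⟩, hb2⟩ := hval (3 * a / 4) z2 hz2
    have hb2' := abs_le.1 hb2
    have hk2val : k2 = -1 := by
      have hup : k2 ≤ -1 := by
        by_contra hc
        push_neg at hc
        have hc' : 0 ≤ k2 := by omega
        have : (0 : ℝ) ≤ (k2 : ℝ) := by exact_mod_cast hc'
        nlinarith
      have hlo : -1 ≤ k2 := by
        by_contra hc
        push_neg at hc
        have hc' : k2 ≤ -2 := by omega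
        have : (k2 : ℝ) ≤ -2 := by exact_mod_cast hc'
        nlinarith
      omega
    have hfz2 : liftF ha P z2 = -(a / 4) := by
      rw [hk2, hk2val]
      push_cast
      ring
    have hdz : dist (P z1) (P z2) = ‖((a / 2 - 3 * a / 4 : ℝ) : AddCircle a)‖ := by
      rw [dist_eq_norm, hz1, hz2, coe_sub']
      abel_nf
    have hnval : ‖((a / 2 - 3 * a / 4 : ℝ) : AddCircle a)‖ = a / 4 := by
      have habs : |a / 2 - 3 * a / 4| = a / 4 := by
        rw [abs_of_nonpos (by linarith)]
        ring
      rw [(AddCircle.norm_coe_eq_abs_iff a ha.ne').2 (by rw [habs, abs_of_pos ha]; linarith),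
        habs]
    have hfinal := circLip z1 z2
    rw [hfz1, hfz2, hdz, hnval] at hfinal
    have : |a / 2 - -(a / 4)| = 3 * a / 4 := by
      rw [abs_of_nonneg (by linarith)]
      ring
    rw [this] at hfinal
    linarith
  · -- `liftF z1 = -a/2`; use the fiber over `P 0 + a/4`
    have hfz1 : liftF ha P z1 = -(a / 2) := by
      rw [hk1, hcase]
      push_cast
      ring
    obtain ⟨z3, hz3⟩ := hsurj (P 0 + ((a / 4 : ℝ) : AddCircle a))
    obtain ⟨⟨k3, hk3⟩, hb3⟩ := hval (a / 4) z3 hz3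
    have hb3' := abs_le.1 hb3
    have hk3val : k3 = 0 := by
      have hup : k3 ≤ 0 := by
        by_contra hc
        push_neg at hc
        have : (1 : ℝ) ≤ (k3 : ℝ) := by exact_mod_cast hc
        nlinarith
      have hlo : 0 ≤ k3 := by
        by_contra hc
        push_neg at hc
        have hc' : k3 ≤ -1 := by omega
        have : (k3 : ℝ) ≤ -1 := by exact_mod_cast hc'
        nlinarith
      omega
    have hfz3 : liftF ha P z3 = a / 4 := by
      rw [hk3, hk3val]
      norm_num
    have hdz : dist (P z1) (P z3) = ‖((a / 2 - a / 4 : ℝ) : AddCircle a)‖ := by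
      rw [dist_eq_norm, hz1, hz3, coe_sub']
      abel_nf
    have hnval : ‖((a / 2 - a / 4 : ℝ) : AddCircle a)‖ = a / 4 := by
      have habs : |a / 2 - a / 4| = a / 4 := by
        rw [abs_of_nonneg (by linarith)]
        ring
      rw [(AddCircle.norm_coe_eq_abs_iff a ha.ne').2 (by rw [habs, abs_of_pos ha]; linarith),
        habs]
    have hfinal := circLip z1 z3
    rw [hfz1, hfz3, hdz, hnval] at hfinal
    have : |-(a / 2) - a / 4| = 3 * a / 4 := by
      rw [abs_of_nonpos (by linarith)]
      ring
    rw [this] at hfinal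
    linarith
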